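/- Let G = ⟨a,b | a^{11} = b^2 = 1, bab^{-1} = a^{-1}⟩ be the dihedral group of order 22 and let S = {b, a^2 b, a^6 b, a^7 b, a^8 b, a^{10} b}. Then the Cayley graph Γ = Cay(G,S) (the graph 𝒢_{22,6}) is distance transitive, has diameter 3, and has intersection array {6,5,3;1,3,6}: for all vertices u,v with d_Γ(u,v) = i (0 ≤ i ≤ 3), the number of neighbors w of v with d_Γ(u,w) = i+1 equals b_i and the number of neighbors w of v with d_Γ(u,w) = i−1 equals c_i, where (b_0,b_1,b_2,b_3) = (6,5,3,0) and (c_0,c_1,c_2,c_3) = (0,1,3,6). -/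

import Mathlib

open SimpleGraph DihedralGroup

/-- The generator `a = r 1` of rotations in the dihedral group of order 22. -/
def dihA : DihedralGroup 11 := DihedralGroup.r 1

/-- The reflection `b = sr 0` in the dihedral group of order 22. -/
def dihB : DihedralGroup 11 := DihedralGroup.sr 0

/-- The connection set `S = {b, a²b, a⁶b, a⁷b, a⁸b, a¹⁰b}`. -/
def g226S : Finset (DihedralGroup 11) :=
  {dihB, dihA ^ 2 * dihB, dihA ^ 6 * dihB, dihA ^ 7 * dihB, dihA ^ 8 * dihB,
    dihA ^ 10 * dihB}

/-- The graph `𝒢_{22,6}`: the Cayley graph `Cay(G, S)` of the dihedral group `G` of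
order `22` with respect to `S = {b, a²b, a⁶b, a⁷b, a⁸b, a¹⁰b}`. -/
def g226 : SimpleGraph (DihedralGroup 11) where
  Adj x y := y * x⁻¹ ∈ g226S
  symm := by
    have h : ∀ x y : DihedralGroup 11, y * x⁻¹ ∈ g226S → x * y⁻¹ ∈ g226S := by decide
    exact ⟨fun x y hxy => h x y hxy⟩
  loopless := by
    have h : ∀ x : DihedralGroup 11, ¬ x * x⁻¹ ∈ g226S := by decide
    exact ⟨h⟩

variable {V : Type*}

/-- The automorphism group of a simple graph, as a subgroup of the permutation
group of the vertex set. -/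
def SimpleGraph.autGroup (Γ : SimpleGraph V) : Subgroup (Equiv.Perm V) where
  carrier := {f | ∀ u v : V, Γ.Adj (f u) (f v) ↔ Γ.Adj u v}
  one_mem' := by intro u v; simp
  mul_mem' := by
    intro f g hf hg u v
    simp only [Equiv.Perm.mul_apply]
    rw [hf, hg]
  inv_mem' := by
    intro f hf u v
    have h := hf (f⁻¹ u) (f⁻¹ v)
    simpa using h.symm

/-! ### Auxiliary machinery -/

set_option maxRecDepth 4000

instance g226.adjDecidable : DecidableRel g226.Adj :=
  fun x y => inferInstanceAs (Decidable (y * x⁻¹ ∈ g226S))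

lemma mem_autGroup_iff (Γ : SimpleGraph V) (f : Equiv.Perm V) :
    f ∈ Γ.autGroup ↔ ∀ u v : V, Γ.Adj (f u) (f v) ↔ Γ.Adj u v := Iff.rfl

/-- The distance-from-the-identity function for `g226`. -/
def dfun : DihedralGroup 11 → ℕ
  | .r i => if i = 0 then 0 else 2
  | .sr i => if i ∈ ({0, 1, 3, 4, 5, 9} : Finset (ZMod 11)) then 1 else 3

lemma dist_eq_of_f {V : Type*} (G : SimpleGraph V) (u : V) (f : V → ℕ)
    (h0 : ∀ v, f v = 0 ↔ v = u)
    (hup : ∀ v w, G.Adj v w → f w ≤ f v + 1)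
    (hdown : ∀ v, 0 < f v → ∃ w, G.Adj w v ∧ f w + 1 = f v) :
    ∀ v, G.Reachable u v ∧ G.dist u v = f v := by
  have upper : ∀ n v, f v = n → G.Reachable u v ∧ G.dist u v ≤ n := by
    intro n
    induction n with
    | zero =>
      intro v hv
      cases (h0 v).mp hv
      exact ⟨Reachable.refl _, by simp [SimpleGraph.dist_self]⟩
    | succ n ih =>
      intro v hv
      obtain ⟨w, hadj, hw⟩ := hdown v (by omega)
      have hfw : f w = n := by omega
      obtain ⟨hr, hle⟩ := ih w hfw
      refine ⟨hr.trans hadj.reachable, ?_⟩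
      obtain ⟨p, hp⟩ := hr.exists_walk_length_eq_dist
      have := SimpleGraph.dist_le (p.concat hadj)
      rw [SimpleGraph.Walk.length_concat, hp] at this
      omega
  have lower0 : ∀ a b (p : G.Walk a b), f a ≤ f b + p.length := by
    intro a b p
    induction p with
    | nil => simp
    | @cons a b c h q ih =>
      have h1 := hup _ _ h.symm
      simp only [SimpleGraph.Walk.length_cons]
      omega
  have lower : ∀ v (p : G.Walk v u), f v ≤ p.length := by
    intro v p
    have := lower0 v u p
    have hu : f u = 0 := (h0 u).mpr rfl
    omega
  intro v
  obtain ⟨hr, hle⟩ := upper (f v) v rfl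
  refine ⟨hr, le_antisymm hle ?_⟩
  obtain ⟨p, hp⟩ := hr.symm.exists_walk_length_eq_dist
  have := lower v p
  rwa [hp, SimpleGraph.dist_comm] at this

lemma dfun_zero : ∀ u v : DihedralGroup 11, dfun (v * u⁻¹) = 0 ↔ v = u := by decide

lemma dfun_up : ∀ u v w : DihedralGroup 11,
    g226.Adj v w → dfun (w * u⁻¹) ≤ dfun (v * u⁻¹) + 1 := by decide

lemma dfun_down : ∀ u v : DihedralGroup 11, 0 < dfun (v * u⁻¹) →
    ∃ w, g226.Adj w v ∧ dfun (w * u⁻¹) + 1 = dfun (v * u⁻¹) := by decide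

lemma g226_key (u v : DihedralGroup 11) :
    g226.Reachable u v ∧ g226.dist u v = dfun (v * u⁻¹) :=
  dist_eq_of_f g226 u (fun w => dfun (w * u⁻¹)) (dfun_zero u) (dfun_up u) (dfun_down u) v

lemma g226_dist (u v : DihedralGroup 11) : g226.dist u v = dfun (v * u⁻¹) :=
  (g226_key u v).2

/-! ### Explicit automorphisms fixing the identity -/

def look (v : Fin 11 → ZMod 11) (i : ZMod 11) : ZMod 11 := v ⟨i.val, i.val_lt⟩

def funOf (fr fs : Fin 11 → ZMod 11) : DihedralGroup 11 → DihedralGroup 11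
  | .r i => .r (look fr i)
  | .sr i => .sr (look fs i)

def permOf (f g : DihedralGroup 11 → DihedralGroup 11)
    (h1 : ∀ x, g (f x) = x) (h2 : ∀ x, f (g x) = x) :
    Equiv.Perm (DihedralGroup 11) :=
  ⟨f, g, h1, h2⟩

def f0 : DihedralGroup 11 → DihedralGroup 11 := funOf ![0,1,2,3,4,5,6,7,8,9,10] ![0,1,2,3,4,5,6,7,8,9,10]
def g0 : DihedralGroup 11 → DihedralGroup 11 := funOf ![0,1,2,3,4,5,6,7,8,9,10] ![0,1,2,3,4,5,6,7,8,9,10]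
def sig0 : Equiv.Perm (DihedralGroup 11) := permOf f0 g0 (by decide) (by decide)
lemma f0_mem : ∀ u v : DihedralGroup 11, g226.Adj (f0 u) (f0 v) ↔ g226.Adj u v := by decide

def f1 : DihedralGroup 11 → DihedralGroup 11 := funOf ![0,3,6,9,1,4,7,10,2,5,8] ![0,3,6,9,1,4,7,10,2,5,8]
def g1 : DihedralGroup 11 → DihedralGroup 11 := funOf ![0,4,8,1,5,9,2,6,10,3,7] ![0,4,8,1,5,9,2,6,10,3,7]
def sig1 : Equiv.Perm (DihedralGroup 11) := permOf f1 g1 (by decide) (by decide)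
lemma f1_mem : ∀ u v : DihedralGroup 11, g226.Adj (f1 u) (f1 v) ↔ g226.Adj u v := by decide

def f2 : DihedralGroup 11 → DihedralGroup 11 := funOf ![0,4,8,1,5,9,2,6,10,3,7] ![0,4,8,1,5,9,2,6,10,3,7]
def g2 : DihedralGroup 11 → DihedralGroup 11 := funOf ![0,3,6,9,1,4,7,10,2,5,8] ![0,3,6,9,1,4,7,10,2,5,8]
def sig2 : Equiv.Perm (DihedralGroup 11) := permOf f2 g2 (by decide) (by decide)
lemma f2_mem : ∀ u v : DihedralGroup 11, g226.Adj (f2 u) (f2 v) ↔ g226.Adj u v := by decide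

def f3 : DihedralGroup 11 → DihedralGroup 11 := funOf ![0,5,10,4,9,3,8,2,7,1,6] ![0,5,10,4,9,3,8,2,7,1,6]
def g3 : DihedralGroup 11 → DihedralGroup 11 := funOf ![0,9,7,5,3,1,10,8,6,4,2] ![0,9,7,5,3,1,10,8,6,4,2]
def sig3 : Equiv.Perm (DihedralGroup 11) := permOf f3 g3 (by decide) (by decide)
lemma f3_mem : ∀ u v : DihedralGroup 11, g226.Adj (f3 u) (f3 v) ↔ g226.Adj u v := by decide

def f4 : DihedralGroup 11 → DihedralGroup 11 := funOf ![0,9,7,5,3,1,10,8,6,4,2] ![0,9,7,5,3,1,10,8,6,4,2]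
def g4 : DihedralGroup 11 → DihedralGroup 11 := funOf ![0,5,10,4,9,3,8,2,7,1,6] ![0,5,10,4,9,3,8,2,7,1,6]
def sig4 : Equiv.Perm (DihedralGroup 11) := permOf f4 g4 (by decide) (by decide)
lemma f4_mem : ∀ u v : DihedralGroup 11, g226.Adj (f4 u) (f4 v) ↔ g226.Adj u v := by decide

def f5 : DihedralGroup 11 → DihedralGroup 11 := funOf ![0,6,9,10,4,5,1,8,7,2,3] ![1,0,7,3,4,9,10,2,8,5,6]
def g5 : DihedralGroup 11 → DihedralGroup 11 := funOf ![0,6,9,10,4,5,1,8,7,2,3] ![1,0,7,3,4,9,10,2,8,5,6]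
def sig5 : Equiv.Perm (DihedralGroup 11) := permOf f5 g5 (by decide) (by decide)
lemma f5_mem : ∀ u v : DihedralGroup 11, g226.Adj (f5 u) (f5 v) ↔ g226.Adj u v := by decide

def f6 : DihedralGroup 11 → DihedralGroup 11 := funOf ![0,1,10,7,4,6,5,3,9,8,2] ![3,1,2,0,5,4,10,8,7,9,6]
def g6 : DihedralGroup 11 → DihedralGroup 11 := funOf ![0,1,10,7,4,6,5,3,9,8,2] ![3,1,2,0,5,4,10,8,7,9,6]
def sig6 : Equiv.Perm (DihedralGroup 11) := permOf f6 g6 (by decide) (by decide)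
lemma f6_mem : ∀ u v : DihedralGroup 11, g226.Adj (f6 u) (f6 v) ↔ g226.Adj u v := by decide

def f7 : DihedralGroup 11 → DihedralGroup 11 := funOf ![0,7,4,8,2,5,10,1,3,9,6] ![4,1,7,9,0,5,8,2,6,3,10]
def g7 : DihedralGroup 11 → DihedralGroup 11 := funOf ![0,7,4,8,2,5,10,1,3,9,6] ![4,1,7,9,0,5,8,2,6,3,10]
def sig7 : Equiv.Perm (DihedralGroup 11) := permOf f7 g7 (by decide) (by decide)
lemma f7_mem : ∀ u v : DihedralGroup 11, g226.Adj (f7 u) (f7 v) ↔ g226.Adj u v := by decide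

def f8 : DihedralGroup 11 → DihedralGroup 11 := funOf ![0,8,2,9,6,10,4,7,1,3,5] ![5,1,6,3,9,0,2,7,10,4,8]
def g8 : DihedralGroup 11 → DihedralGroup 11 := funOf ![0,8,2,9,6,10,4,7,1,3,5] ![5,1,6,3,9,0,2,7,10,4,8]
def sig8 : Equiv.Perm (DihedralGroup 11) := permOf f8 g8 (by decide) (by decide)
lemma f8_mem : ∀ u v : DihedralGroup 11, g226.Adj (f8 u) (f8 v) ↔ g226.Adj u v := by decide

def f9 : DihedralGroup 11 → DihedralGroup 11 := funOf ![0,3,5,1,10,2,6,9,8,7,4] ![9,1,8,5,4,3,6,10,2,0,7]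
def g9 : DihedralGroup 11 → DihedralGroup 11 := funOf ![0,3,5,1,10,2,6,9,8,7,4] ![9,1,8,5,4,3,6,10,2,0,7]
def sig9 : Equiv.Perm (DihedralGroup 11) := permOf f9 g9 (by decide) (by decide)
lemma f9_mem : ∀ u v : DihedralGroup 11, g226.Adj (f9 u) (f9 v) ↔ g226.Adj u v := by decide

def f10 : DihedralGroup 11 → DihedralGroup 11 := funOf ![0,2,1,10,5,4,9,7,8,6,3] ![1,0,6,4,3,5,2,10,8,9,7]
def g10 : DihedralGroup 11 → DihedralGroup 11 := funOf ![0,2,1,10,5,4,9,7,8,6,3] ![1,0,6,4,3,5,2,10,8,9,7]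
def sig10 : Equiv.Perm (DihedralGroup 11) := permOf f10 g10 (by decide) (by decide)
lemma f10_mem : ∀ u v : DihedralGroup 11, g226.Adj (f10 u) (f10 v) ↔ g226.Adj u v := by decide

def f11 : DihedralGroup 11 → DihedralGroup 11 := funOf ![0,4,2,6,1,7,3,5,9,8,10] ![3,9,2,0,4,5,7,6,10,1,8]
def g11 : DihedralGroup 11 → DihedralGroup 11 := funOf ![0,4,2,6,1,7,3,5,9,8,10] ![3,9,2,0,4,5,7,6,10,1,8]
def sig11 : Equiv.Perm (DihedralGroup 11) := permOf f11 g11 (by decide) (by decide)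
lemma f11_mem : ∀ u v : DihedralGroup 11, g226.Adj (f11 u) (f11 v) ↔ g226.Adj u v := by decide

def f12 : DihedralGroup 11 → DihedralGroup 11 := funOf ![0,7,3,2,8,9,6,1,4,5,10] ![4,5,8,3,0,1,7,6,2,9,10]
def g12 : DihedralGroup 11 → DihedralGroup 11 := funOf ![0,7,3,2,8,9,6,1,4,5,10] ![4,5,8,3,0,1,7,6,2,9,10]
def sig12 : Equiv.Perm (DihedralGroup 11) := permOf f12 g12 (by decide) (by decide)
lemma f12_mem : ∀ u v : DihedralGroup 11, g226.Adj (f12 u) (f12 v) ↔ g226.Adj u v := by decide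

def f13 : DihedralGroup 11 → DihedralGroup 11 := funOf ![0,10,7,3,6,8,4,2,5,9,1] ![5,3,10,1,4,0,8,7,6,9,2]
def g13 : DihedralGroup 11 → DihedralGroup 11 := funOf ![0,10,7,3,6,8,4,2,5,9,1] ![5,3,10,1,4,0,8,7,6,9,2]
def sig13 : Equiv.Perm (DihedralGroup 11) := permOf f13 g13 (by decide) (by decide)
lemma f13_mem : ∀ u v : DihedralGroup 11, g226.Adj (f13 u) (f13 v) ↔ g226.Adj u v := by decide

def f14 : DihedralGroup 11 → DihedralGroup 11 := funOf ![0,1,5,3,7,2,8,4,6,10,9] ![9,4,10,3,1,5,6,8,7,0,2]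
def g14 : DihedralGroup 11 → DihedralGroup 11 := funOf ![0,1,5,3,7,2,8,4,6,10,9] ![9,4,10,3,1,5,6,8,7,0,2]
def sig14 : Equiv.Perm (DihedralGroup 11) := permOf f14 g14 (by decide) (by decide)
lemma f14_mem : ∀ u v : DihedralGroup 11, g226.Adj (f14 u) (f14 v) ↔ g226.Adj u v := by decide

def stabF : Fin 15 → DihedralGroup 11 → DihedralGroup 11 := ![f0,f1,f2,f3,f4,f5,f6,f7,f8,f9,f10,f11,f12,f13,f14]
def stabPerm : Fin 15 → Equiv.Perm (DihedralGroup 11) := ![sig0,sig1,sig2,sig3,sig4,sig5,sig6,sig7,sig8,sig9,sig10,sig11,sig12,sig13,sig14]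

lemma stabPerm_coe : ∀ k : Fin 15, ⇑(stabPerm k) = stabF k := by
  intro k; fin_cases k <;> rfl

lemma stabPerm_mem : ∀ k : Fin 15, stabPerm k ∈ g226.autGroup := by
  intro k
  rw [mem_autGroup_iff]
  fin_cases k <;>
    first
      | exact f0_mem
      | exact f1_mem
      | exact f2_mem
      | exact f3_mem
      | exact f4_mem
      | exact f5_mem
      | exact f6_mem
      | exact f7_mem
      | exact f8_mem
      | exact f9_mem
      | exact f10_mem
      | exact f11_mem
      | exact f12_mem
      | exact f13_mem
      | exact f14_mem

lemma stabF_one : ∀ k : Fin 15, stabF k (1 : DihedralGroup 11) = 1 := by decide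

lemma stab_trans : ∀ w z : DihedralGroup 11, dfun w = dfun z →
    ∃ k : Fin 15, stabF k w = z := by decide

lemma mulRight_mem_aut (g : DihedralGroup 11) :
    Equiv.mulRight g ∈ g226.autGroup := by
  rw [mem_autGroup_iff]
  intro u v
  show (v * g) * (u * g)⁻¹ ∈ g226S ↔ v * u⁻¹ ∈ g226S
  rw [mul_inv_rev, show v * g * (g⁻¹ * u⁻¹) = v * u⁻¹ by group]

/-! ### Counting -/

lemma nat_card_eq (p : DihedralGroup 11 → Prop) [DecidablePred p] :
    Nat.card {w | p w} = (Finset.univ.filter p).card := by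
  rw [Nat.card_eq_card_toFinset, Set.toFinset_setOf]

lemma countLemma : ∀ u v : DihedralGroup 11, ∀ i : Fin 4, dfun (v * u⁻¹) = (i : ℕ) →
    ((Finset.univ.filter fun w => g226.Adj v w ∧ dfun (w * u⁻¹) = (i : ℕ) + 1).card
        = ![6, 5, 3, 0] i ∧
      (Finset.univ.filter fun w => g226.Adj v w ∧ dfun (w * u⁻¹) = (i : ℕ) - 1).card
        = ![0, 1, 3, 6] i) := by decide

lemma dfun_le : ∀ x : DihedralGroup 11, dfun x ≤ 3 := by decide

lemma g226_ediam : g226.ediam = 3 := by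
  apply le_antisymm
  · apply SimpleGraph.ediam_le_of_edist_le
    intro u v
    obtain ⟨p, hp⟩ := (g226_key u v).1.exists_walk_length_eq_dist
    have h1 := SimpleGraph.edist_le p
    have h2 : p.length ≤ 3 := by rw [hp, g226_dist]; exact dfun_le _
    exact h1.trans (by exact_mod_cast Nat.cast_le.mpr h2)
  · have hr := (g226_key (1 : DihedralGroup 11) (.sr 2)).1
    have hne : g226.edist (1 : DihedralGroup 11) (.sr 2) ≠ ⊤ :=
      SimpleGraph.edist_ne_top_iff_reachable.mpr hr
    have hd : g226.dist (1 : DihedralGroup 11) (.sr 2) = 3 := by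
      rw [g226_dist]; decide
    have : g226.edist (1 : DihedralGroup 11) (.sr 2) = 3 := by
      have := ENat.coe_toNat hne
      rw [← this]
      rw [show (g226.edist (1 : DihedralGroup 11) (.sr 2)).toNat
            = g226.dist (1 : DihedralGroup 11) (.sr 2) from rfl, hd]
      rfl
    rw [← this]
    exact SimpleGraph.edist_le_ediam

lemma g226_diam : g226.diam = 3 := by
  rw [SimpleGraph.diam, g226_ediam]
  rfl

/-- The Cayley graph `𝒢_{22,6} = Cay(G, S)` of the dihedral group
of order `22` with `S = {b, a²b, a⁶b, a⁷b, a⁸b, a¹⁰b}` is distance transitive, has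
diameter `3`, and has intersection array `{6,5,3;1,3,6}`: whenever `d(u,v) = i`
(`0 ≤ i ≤ 3`), the number of neighbours of `v` at distance `i+1` from `u` is `bᵢ`
and the number of neighbours of `v` at distance `i-1` from `u` is `cᵢ`, where
`(b₀,b₁,b₂,b₃) = (6,5,3,0)` and `(c₀,c₁,c₂,c₃) = (0,1,3,6)`. -/
theorem g226_distance_transitive_intersection_array :
    (∀ u v x y : DihedralGroup 11, g226.dist u v = g226.dist x y →
      ∃ g ∈ g226.autGroup, g u = x ∧ g v = y) ∧
    g226.diam = 3 ∧
    ∀ u v : DihedralGroup 11, ∀ i : Fin 4, g226.dist u v = (i : ℕ) →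
      Nat.card {w : DihedralGroup 11 |
          g226.Adj v w ∧ g226.dist u w = (i : ℕ) + 1} = ![6, 5, 3, 0] i ∧
      Nat.card {w : DihedralGroup 11 |
          g226.Adj v w ∧ g226.dist u w = (i : ℕ) - 1} = ![0, 1, 3, 6] i := by
  refine ⟨?_, g226_diam, ?_⟩
  · intro u v x y h
    rw [g226_dist, g226_dist] at h
    obtain ⟨k, hσ⟩ := stab_trans _ _ h
    refine ⟨Equiv.mulRight x * stabPerm k * Equiv.mulRight u⁻¹,
      mul_mem (mul_mem (mulRight_mem_aut x) (stabPerm_mem k))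
        (mulRight_mem_aut u⁻¹), ?_, ?_⟩
    · simp only [Equiv.Perm.mul_apply, Equiv.coe_mulRight, stabPerm_coe]
      rw [mul_inv_cancel, stabF_one k, one_mul]
    · simp only [Equiv.Perm.mul_apply, Equiv.coe_mulRight, stabPerm_coe]
      rw [hσ, inv_mul_cancel_right]
  · intro u v i h
    rw [g226_dist] at h
    have hc := countLemma u v i h
    simp only [g226_dist]
    rw [nat_card_eq, nat_card_eq]
    exact hc
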